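/- Fix a real α > 0, positive integers p, q with p + q = n, and positive reals λ, λ₁, λ₁* such that λ₁* = min(λ, λ₁, λ₁*) and (λ₁, λ) is weakly majorized by (λ₁*, λ) (so that either λ₁* ≤ λ ≤ λ₁ or λ₁* ≤ λ₁ ≤ λ). Then the ratio of reverse hazard rates of the two multiple-outlier parallel systems, r_{n:n}*(t) / r_{n:n}(t) = [p·u(λ₁* t) + q·u(λ t)] / [p·u(λ₁ t) + q·u(λ t)], where u(s) = s^α / (e^{s^α} − 1), is increasing in t on (0, ∞). -/
import Mathlib


open Real Set

/-- `g x = x / (e^x - 1)`, the building block of the Weibull reverse hazard rate. -/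
noncomputable def weibullG (x : ℝ) : ℝ := x / (Real.exp x - 1)

lemma weibull_exp_sub_one_pos {x : ℝ} (hx : 0 < x) : 0 < Real.exp x - 1 := by
  have : (1 : ℝ) < Real.exp x := by
    simpa using Real.exp_lt_exp.mpr hx
  linarith

lemma weibullG_pos {x : ℝ} (hx : 0 < x) : 0 < weibullG x :=
  div_pos hx (weibull_exp_sub_one_pos hx)

/-- `g` is antitone on `(0, ∞)`. -/
lemma weibullG_anti {x y : ℝ} (hx : 0 < x) (hxy : x ≤ y) : weibullG y ≤ weibullG x := by
  have key : AntitoneOn weibullG (Ioi 0) := by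
    apply antitoneOn_of_deriv_nonpos (convex_Ioi 0)
    · apply ContinuousOn.div continuousOn_id
      · exact (Real.continuous_exp.sub continuous_const).continuousOn
      · exact fun z hz => ne_of_gt (weibull_exp_sub_one_pos hz)
    · rw [interior_Ioi]
      intro z hz
      exact (((hasDerivAt_id z).div ((Real.hasDerivAt_exp z).sub_const 1)
        (ne_of_gt (weibull_exp_sub_one_pos hz))).differentiableAt).differentiableWithinAt
    · rw [interior_Ioi]
      intro z hz
      have hz' : (0:ℝ) < Real.exp z - 1 := weibull_exp_sub_one_pos hz
      have hd : HasDerivAt weibullG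
          ((1 * (Real.exp z - 1) - z * Real.exp z) / (Real.exp z - 1) ^ 2) z :=
        (hasDerivAt_id z).div ((Real.hasDerivAt_exp z).sub_const 1) (ne_of_gt hz')
      rw [hd.deriv]
      apply div_nonpos_of_nonpos_of_nonneg _ (by positivity)
      -- need exp z - 1 ≤ z * exp z, i.e. 1 - z ≤ exp (-z) times exp z
      have h1 : -z + 1 ≤ Real.exp (-z) := Real.add_one_le_exp (-z)
      have h2 : Real.exp (-z) * Real.exp z = 1 := by
        rw [← Real.exp_add]; simp
      nlinarith [mul_le_mul_of_nonneg_right h1 (Real.exp_pos z).le]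
  exact key (mem_Ioi.mpr hx) (mem_Ioi.mpr (hx.trans_le hxy)) hxy

/-- `k x = x e^x / (e^x - 1)` is monotone on `(0, ∞)`. -/
lemma weibullK_mono : MonotoneOn (fun x => x * Real.exp x / (Real.exp x - 1)) (Ioi 0) := by
  apply monotoneOn_of_deriv_nonneg (convex_Ioi 0)
  · apply ContinuousOn.div (continuousOn_id.mul Real.continuous_exp.continuousOn)
      ((Real.continuous_exp.sub continuous_const).continuousOn)
      (fun z hz => ne_of_gt (weibull_exp_sub_one_pos hz))
  · rw [interior_Ioi]
    intro z hz
    exact ((((hasDerivAt_id z).mul (Real.hasDerivAt_exp z)).div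
      ((Real.hasDerivAt_exp z).sub_const 1)
      (ne_of_gt (weibull_exp_sub_one_pos hz))).differentiableAt).differentiableWithinAt
  · rw [interior_Ioi]
    intro z hz
    have hz' : (0:ℝ) < Real.exp z - 1 := weibull_exp_sub_one_pos hz
    have hd : HasDerivAt (fun x => x * Real.exp x / (Real.exp x - 1))
        (((1 * Real.exp z + z * Real.exp z) * (Real.exp z - 1) -
          z * Real.exp z * Real.exp z) / (Real.exp z - 1) ^ 2) z :=
      ((hasDerivAt_id z).mul (Real.hasDerivAt_exp z)).div
        ((Real.hasDerivAt_exp z).sub_const 1) (ne_of_gt hz')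
    rw [hd.deriv]
    apply div_nonneg _ (by positivity)
    have h1 : z + 1 ≤ Real.exp z := Real.add_one_le_exp z
    nlinarith [mul_le_mul_of_nonneg_left h1 (Real.exp_pos z).le]

/-- The core log-submodularity inequality `(e^{ct}-1)(e^{ds}-1) ≤ (e^{cs}-1)(e^{dt}-1)`. -/
lemma weibull_exp_submod {c d s t : ℝ} (hc : 0 < c) (hcd : c ≤ d) (hs : 0 < s) (hst : s ≤ t) :
    (Real.exp (c * t) - 1) * (Real.exp (d * s) - 1) ≤
      (Real.exp (c * s) - 1) * (Real.exp (d * t) - 1) := by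
  have ht : 0 < t := hs.trans_le hst
  have hd0 : 0 < d := hc.trans_le hcd
  have hM : AntitoneOn
      (fun c : ℝ => Real.log (Real.exp (c * s) - 1) - Real.log (Real.exp (c * t) - 1))
      (Ioi 0) := by
    apply antitoneOn_of_deriv_nonpos (convex_Ioi 0)
    · apply ContinuousOn.sub
      · apply Real.continuousOn_log.comp
          ((Real.continuous_exp.comp (continuous_id.mul continuous_const)).sub
            continuous_const).continuousOn
        intro z hz
        exact ne_of_gt (weibull_exp_sub_one_pos (mul_pos hz hs))
      · apply Real.continuousOn_log.comp
          ((Real.continuous_exp.comp (continuous_id.mul continuous_const)).sub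
            continuous_const).continuousOn
        intro z hz
        exact ne_of_gt (weibull_exp_sub_one_pos (mul_pos hz ht))
    · rw [interior_Ioi]
      intro z hz
      have hzs : 0 < z * s := mul_pos hz hs
      have hzt : 0 < z * t := mul_pos hz ht
      have h1 : HasDerivAt (fun c : ℝ => c * s) s z := by
        simpa using (hasDerivAt_id z).mul_const s
      have h2 : HasDerivAt (fun c : ℝ => c * t) t z := by
        simpa using (hasDerivAt_id z).mul_const t
      exact (((h1.exp.sub_const 1).log (ne_of_gt (weibull_exp_sub_one_pos hzs))).sub
        ((h2.exp.sub_const 1).log (ne_of_gt (weibull_exp_sub_one_pos hzt)))).differentiableAt.differentiableWithinAt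
    · rw [interior_Ioi]
      intro z hz
      have hzs : 0 < z * s := mul_pos hz hs
      have hzt : 0 < z * t := mul_pos hz ht
      have e1 : (0:ℝ) < Real.exp (z * s) - 1 := weibull_exp_sub_one_pos hzs
      have e2 : (0:ℝ) < Real.exp (z * t) - 1 := weibull_exp_sub_one_pos hzt
      have h1 : HasDerivAt (fun c : ℝ => c * s) s z := by
        simpa using (hasDerivAt_id z).mul_const s
      have h2 : HasDerivAt (fun c : ℝ => c * t) t z := by
        simpa using (hasDerivAt_id z).mul_const t
      have hd : HasDerivAt
          (fun c : ℝ => Real.log (Real.exp (c * s) - 1) - Real.log (Real.exp (c * t) - 1))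
          (Real.exp (z * s) * s / (Real.exp (z * s) - 1) -
            Real.exp (z * t) * t / (Real.exp (z * t) - 1)) z :=
        ((h1.exp.sub_const 1).log (ne_of_gt e1)).sub
          ((h2.exp.sub_const 1).log (ne_of_gt e2))
      rw [hd.deriv]
      have hk := weibullK_mono (mem_Ioi.mpr hzs) (mem_Ioi.mpr hzt)
        (mul_le_mul_of_nonneg_left hst hz.le)
      simp only at hk
      rw [div_le_div_iff₀ e1 e2] at hk
      rw [sub_nonpos, div_le_div_iff₀ e1 e2]
      exact le_of_mul_le_mul_left (by nlinarith [hk]) hz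
  have hMcd := hM (mem_Ioi.mpr hc) (mem_Ioi.mpr hd0) hcd
  simp only at hMcd
  have e1 : (0:ℝ) < Real.exp (c * s) - 1 := weibull_exp_sub_one_pos (mul_pos hc hs)
  have e2 : (0:ℝ) < Real.exp (c * t) - 1 := weibull_exp_sub_one_pos (mul_pos hc ht)
  have e3 : (0:ℝ) < Real.exp (d * s) - 1 := weibull_exp_sub_one_pos (mul_pos hd0 hs)
  have e4 : (0:ℝ) < Real.exp (d * t) - 1 := weibull_exp_sub_one_pos (mul_pos hd0 ht)
  have hlog : Real.log ((Real.exp (c * t) - 1) * (Real.exp (d * s) - 1)) ≤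
      Real.log ((Real.exp (c * s) - 1) * (Real.exp (d * t) - 1)) := by
    rw [Real.log_mul (ne_of_gt e2) (ne_of_gt e3), Real.log_mul (ne_of_gt e1) (ne_of_gt e4)]
    linarith
  exact (Real.log_le_log_iff (mul_pos e2 e3) (mul_pos e1 e4)).mp hlog

/-- Key lemma: `g(cs) g(dt) ≤ g(ct) g(ds)` for `0 < c ≤ d`, `0 < s ≤ t`. -/
lemma weibullG_submod {c d s t : ℝ} (hc : 0 < c) (hcd : c ≤ d) (hs : 0 < s) (hst : s ≤ t) :
    weibullG (c * s) * weibullG (d * t) ≤ weibullG (c * t) * weibullG (d * s) := by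
  have ht : 0 < t := hs.trans_le hst
  have hd0 : 0 < d := hc.trans_le hcd
  have e1 : (0:ℝ) < Real.exp (c * s) - 1 := weibull_exp_sub_one_pos (mul_pos hc hs)
  have e2 : (0:ℝ) < Real.exp (c * t) - 1 := weibull_exp_sub_one_pos (mul_pos hc ht)
  have e3 : (0:ℝ) < Real.exp (d * s) - 1 := weibull_exp_sub_one_pos (mul_pos hd0 hs)
  have e4 : (0:ℝ) < Real.exp (d * t) - 1 := weibull_exp_sub_one_pos (mul_pos hd0 ht)
  have hE := weibull_exp_submod hc hcd hs hst
  unfold weibullG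
  rw [div_mul_div_comm, div_mul_div_comm]
  rw [show c * s * (d * t) = c * t * (d * s) by ring]
  exact div_le_div_of_nonneg_left (by positivity) (mul_pos e2 e3) hE

/-- The main cross inequality for the ratio of reverse hazard rates. -/
lemma weibull_cross_ineq {A B L τ₁ τ₂ p q : ℝ}
    (hA : 0 < A) (hAB : A ≤ B) (hAL : A ≤ L)
    (h1 : 0 < τ₁) (h12 : τ₁ ≤ τ₂) (hp : 0 ≤ p) (hq : 0 ≤ q) :
    (p * weibullG (A * τ₁) + q * weibullG (L * τ₁)) *
        (p * weibullG (B * τ₂) + q * weibullG (L * τ₂)) ≤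
      (p * weibullG (A * τ₂) + q * weibullG (L * τ₂)) *
        (p * weibullG (B * τ₁) + q * weibullG (L * τ₁)) := by
  have h2 : 0 < τ₂ := h1.trans_le h12
  have hB : 0 < B := hA.trans_le hAB
  have hL : 0 < L := hA.trans_le hAL
  set a1 := weibullG (A * τ₁)
  set a2 := weibullG (A * τ₂)
  set b1 := weibullG (B * τ₁)
  set b2 := weibullG (B * τ₂)
  set l1 := weibullG (L * τ₁)
  set l2 := weibullG (L * τ₂)
  have hb1 : 0 < b1 := weibullG_pos (mul_pos hB h1)
  have hb2 : 0 < b2 := weibullG_pos (mul_pos hB h2)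
  have hl1 : 0 < l1 := weibullG_pos (mul_pos hL h1)
  have hl2 : 0 < l2 := weibullG_pos (mul_pos hL h2)
  have t1 : a1 * b2 ≤ a2 * b1 := weibullG_submod hA hAB h1 h12
  have T : a1 * l2 + l1 * b2 ≤ a2 * l1 + l2 * b1 := by
    rcases le_total L B with hLB | hBL
    · have tA : a1 * l2 ≤ a2 * l1 := weibullG_submod hA hAL h1 h12
      have tL : l1 * b2 ≤ l2 * b1 := by
        have := weibullG_submod hL hLB h1 h12
        linarith [this]
      linarith
    · -- B ≤ L case
      have tBL : b1 * l2 ≤ b2 * l1 := weibullG_submod hB hBL h1 h12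
      have hab2 : b2 ≤ a2 := weibullG_anti (mul_pos hA h2) (mul_le_mul_of_nonneg_right hAB h2.le)
      -- goal equivalent: l2 * (a1 - b1) ≤ l1 * (a2 - b2)
      have H : (a1 * l2 + l1 * b2) * b2 ≤ (a2 * l1 + l2 * b1) * b2 := by
        nlinarith [mul_le_mul_of_nonneg_right tBL (sub_nonneg.mpr hab2),
          mul_le_mul_of_nonneg_left t1 hl2.le]
      exact le_of_mul_le_mul_right H hb2
  nlinarith [mul_le_mul_of_nonneg_left t1 (mul_nonneg hp hp),
    mul_le_mul_of_nonneg_left T (mul_nonneg hp hq)]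

/-- For any `α > 0` and `p + q = n` with `p, q ≥ 1`, if `λ₁* = min(λ, λ₁, λ₁*)` and
`(λ₁, λ) ≼^w (λ₁*, λ)` (i.e. `min(λ₁, λ) ≥ min(λ₁*, λ)` and `λ₁ + λ ≥ λ₁* + λ`), then
the ratio of reverse hazard rates of the multiple-outlier parallel Weibull systems,
`r_{n:n}*(t) / r_{n:n}(t) = [p·u(λ₁* t) + q·u(λ t)] / [p·u(λ₁ t) + q·u(λ t)]` with
`u(s) = s^α / (e^{s^α} − 1)`, is increasing in `t` on `(0, ∞)`. -/
theorem multiple_outlier_weibull_rhr_ratio_monotone_weak_maj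
    (α lam lam₁ lam₁s : ℝ) (hα : 0 < α)
    (hlam : 0 < lam) (hlam₁ : 0 < lam₁) (hlam₁s : 0 < lam₁s)
    (p q n : ℕ) (hp : 0 < p) (hq : 0 < q) (hn : p + q = n)
    (hmin : lam₁s = min lam (min lam₁ lam₁s))
    (hwmaj : min lam₁s lam ≤ min lam₁ lam ∧ lam₁s + lam ≤ lam₁ + lam) :
    MonotoneOn
      (fun t : ℝ =>
        ((p : ℝ) * ((lam₁s * t) ^ α / (exp ((lam₁s * t) ^ α) - 1)) +
            (q : ℝ) * ((lam * t) ^ α / (exp ((lam * t) ^ α) - 1))) /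
          ((p : ℝ) * ((lam₁ * t) ^ α / (exp ((lam₁ * t) ^ α) - 1)) +
            (q : ℝ) * ((lam * t) ^ α / (exp ((lam * t) ^ α) - 1))))
      (Ioi (0 : ℝ)) := by
  have hsl : lam₁s ≤ lam := by
    rw [hmin]; exact min_le_left _ _
  have hs1 : lam₁s ≤ lam₁ := by
    rw [hmin]; exact le_trans (min_le_right _ _) (min_le_left _ _)
  intro t₁ ht₁ t₂ ht₂ h12
  rw [mem_Ioi] at ht₁ ht₂
  dsimp only
  rw [Real.mul_rpow hlam₁s.le ht₁.le, Real.mul_rpow hlam.le ht₁.le,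
    Real.mul_rpow hlam₁.le ht₁.le, Real.mul_rpow hlam₁s.le ht₂.le,
    Real.mul_rpow hlam.le ht₂.le, Real.mul_rpow hlam₁.le ht₂.le]
  set A := lam₁s ^ α with hAdef
  set B := lam₁ ^ α with hBdef
  set L := lam ^ α with hLdef
  set τ₁ := t₁ ^ α with ht1def
  set τ₂ := t₂ ^ α with ht2def
  have hA : 0 < A := Real.rpow_pos_of_pos hlam₁s α
  have hB : 0 < B := Real.rpow_pos_of_pos hlam₁ α
  have hL : 0 < L := Real.rpow_pos_of_pos hlam α
  have hAB : A ≤ B := Real.rpow_le_rpow hlam₁s.le hs1 hα.le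
  have hAL : A ≤ L := Real.rpow_le_rpow hlam₁s.le hsl hα.le
  have hτ1 : 0 < τ₁ := Real.rpow_pos_of_pos ht₁ α
  have hτ2 : 0 < τ₂ := Real.rpow_pos_of_pos ht₂ α
  have hτ12 : τ₁ ≤ τ₂ := Real.rpow_le_rpow ht₁.le h12 hα.le
  have hp' : (0:ℝ) < (p:ℝ) := by exact_mod_cast hp
  have hq' : (0:ℝ) ≤ (q:ℝ) := by positivity
  have hD1 : (0:ℝ) < (p:ℝ) * (B * τ₁ / (Real.exp (B * τ₁) - 1)) +
      (q:ℝ) * (L * τ₁ / (Real.exp (L * τ₁) - 1)) := by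
    have := weibullG_pos (mul_pos hB hτ1)
    have := weibullG_pos (mul_pos hL hτ1)
    unfold weibullG at *
    nlinarith
  have hD2 : (0:ℝ) < (p:ℝ) * (B * τ₂ / (Real.exp (B * τ₂) - 1)) +
      (q:ℝ) * (L * τ₂ / (Real.exp (L * τ₂) - 1)) := by
    have := weibullG_pos (mul_pos hB hτ2)
    have := weibullG_pos (mul_pos hL hτ2)
    unfold weibullG at *
    nlinarith
  rw [div_le_div_iff₀ hD1 hD2]
  exact weibull_cross_ineq hA hAB hAL hτ1 hτ12 hp'.le hq'
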